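/- In the BSM-localization protocol, the joint outcome statistics reproduce the Born rule of the nonlocal Bell measurement: if qubits 1 (Alice) and 4 (Bob) are in an arbitrary two-qubit state |ψ⟩ and qubits 2 (Alice) and 3 (Bob) are in Φ⁺, then the probability that Alice's Bell measurement on (1,2) yields outcome a and Bob's Bell measurement on (3,4) yields outcome b equals (1/4)·|⟨B_c|ψ⟩|², where B_c is the (unique) Bell state with σ_c ∝ σ_a σ_b. -/

import Mathlib

open Matrix
open scoped Kronecker BigOperators ComplexOrder

noncomputable section

/-- Hermitian inner product (conjugate-linear in the first argument). -/
def dot {I : Type*} [Fintype I] (v w : I → ℂ) : ℂ := ∑ i, star (v i) * w i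

/-- Outer product |v⟩⟨v|. -/
def outer {I : Type*} (v : I → ℂ) : Matrix I I ℂ := fun i j => v i * star (v j)

def ket0 : Fin 2 → ℂ := fun i => if i = 0 then 1 else 0
def ket1 : Fin 2 → ℂ := fun i => if i = 1 then 1 else 0

/-- 1/√2 as a complex number. -/
def isq2 : ℂ := ((Real.sqrt 2)⁻¹ : ℝ)

def ketP : Fin 2 → ℂ := fun _ => isq2
def ketM : Fin 2 → ℂ := fun i => if i = 0 then isq2 else -isq2

/-- Tensor product of two qubit state vectors. -/
def tp (v w : Fin 2 → ℂ) : Fin 2 × Fin 2 → ℂ := fun p => v p.1 * w p.2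

/-- Partial trace over the first (Alice's) qubit; result acts on Bob's qubit. -/
def ptrA (ρ : Matrix (Fin 2 × Fin 2) (Fin 2 × Fin 2) ℂ) : Matrix (Fin 2) (Fin 2) ℂ :=
  fun b b' => ∑ a, ρ (a, b) (a, b')

/-- Partial trace over the second (Bob's) qubit; result acts on Alice's qubit. -/
def ptrB (ρ : Matrix (Fin 2 × Fin 2) (Fin 2 × Fin 2) ℂ) : Matrix (Fin 2) (Fin 2) ℂ :=
  fun a a' => ∑ b, ρ (a, b) (a', b)

/-- Nonselective ideal (Lüders) measurement channel in the orthonormal basis `e`. -/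
def measChan (e : Fin 4 → (Fin 2 × Fin 2 → ℂ))
    (ρ : Matrix (Fin 2 × Fin 2) (Fin 2 × Fin 2) ℂ) : Matrix (Fin 2 × Fin 2) (Fin 2 × Fin 2) ℂ :=
  ∑ i, outer (e i) * ρ * outer (e i)

/-- Pauli matrices. -/
def sx : Matrix (Fin 2) (Fin 2) ℂ := !![0, 1; 1, 0]
def sy : Matrix (Fin 2) (Fin 2) ℂ := !![0, -Complex.I; Complex.I, 0]
def sz : Matrix (Fin 2) (Fin 2) ℂ := !![1, 0; 0, -1]

def pauli : Fin 4 → Matrix (Fin 2) (Fin 2) ℂ := ![1, sx, sy, sz]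

/-- The Bell state Φ⁺ = (|00⟩+|11⟩)/√2. -/
def phiP : Fin 2 × Fin 2 → ℂ := fun p => if p.1 = p.2 then isq2 else 0

/-- Bell basis parametrized by Pauli operators: `bellP k = (I ⊗ σ_k) Φ⁺`. -/
def bellP (k : Fin 4) : Fin 2 × Fin 2 → ℂ := fun p => isq2 * pauli k p.2 p.1

/-- Explicit Bell basis in the order Φ⁺, Ψ⁺, Ψ⁻, Φ⁻. -/
def bPhiP : Fin 2 × Fin 2 → ℂ := fun p => if p.1 = p.2 then isq2 else 0
def bPhiM : Fin 2 × Fin 2 → ℂ := fun p => if p.1 = p.2 then (if p.1 = 0 then isq2 else -isq2) else 0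
def bPsiP : Fin 2 × Fin 2 → ℂ := fun p => if p.1 = p.2 then 0 else isq2
def bPsiM : Fin 2 × Fin 2 → ℂ := fun p => if p.1 = p.2 then 0 else (if p.1 = 0 then isq2 else -isq2)

def bellE : Fin 4 → (Fin 2 × Fin 2 → ℂ) := ![bPhiP, bPsiP, bPsiM, bPhiM]

/-- The twisted basis {|00⟩, |01⟩, |1+⟩, |1-⟩}. -/
def twisted : Fin 4 → (Fin 2 × Fin 2 → ℂ) := ![tp ket0 ket0, tp ket0 ket1, tp ket1 ketP, tp ket1 ketM]

/-- Amplitude that Alice's Bell measurement on qubits (1,2) yields outcome a and Bob's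
Bell measurement on (3,4) yields outcome b, when qubits (1,4) are in the state ψ and
qubits (2,3) are in Φ⁺. -/
def bsmLocAmp (ψ : Fin 2 × Fin 2 → ℂ) (a b : Fin 4) : ℂ :=
  ∑ q1 : Fin 2, ∑ q2 : Fin 2, ∑ q3 : Fin 2, ∑ q4 : Fin 2,
    star (bellP a (q1, q2)) * star (bellP b (q3, q4)) * (ψ (q1, q4) * phiP (q2, q3))

/-! ### Auxiliary machinery -/

section Aux

/-- Phase table for products of Pauli matrices. -/
def wtab : Fin 4 → Fin 4 → ℂ :=
  ![![1,1,1,1], ![1,1,Complex.I,-Complex.I], ![1,-Complex.I,1,Complex.I], ![1,Complex.I,-Complex.I,1]]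

/-- Index table for products of Pauli matrices. -/
def bc : Fin 4 → Fin 4 → Fin 4 :=
  ![![0,1,2,3], ![1,0,3,2], ![2,3,0,1], ![3,2,1,0]]

set_option maxRecDepth 8000 in
set_option maxHeartbeats 1000000 in
lemma pauli_mul (a b : Fin 4) : pauli a * pauli b = wtab a b • pauli (bc a b) := by
  fin_cases a <;> fin_cases b <;>
    ext i j <;> fin_cases i <;> fin_cases j <;>
    simp [pauli, sx, sy, sz, wtab, bc, Matrix.mul_apply, Fin.sum_univ_two, Matrix.one_apply,
      Matrix.vecHead, Matrix.vecTail]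

set_option maxRecDepth 8000 in
set_option maxHeartbeats 1000000 in
lemma pauli_indep {z z' : ℂ} {c c' : Fin 4} (hz : z ≠ 0)
    (h : z • pauli c = z' • pauli c') : c = c' ∧ z = z' := by
  fin_cases c <;> fin_cases c' <;>
    rw [← Matrix.ext_iff] at h <;>
    simp [pauli, sx, sy, sz, Fin.forall_fin_two, Matrix.one_apply] at h <;>
    first
      | exact absurd h.1.2 hz
      | (simp_all [mul_eq_zero, Complex.I_ne_zero]; done)
      | exact absurd h.2.1 hz
      | exact absurd h.1.2 hz
      | exact absurd h.2 hz
      | exact absurd h.1 hz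
      | (exfalso; apply hz; first
          | linear_combination (h.1 - h.2)/2
          | linear_combination (h.2 - h.1)/2
          | linear_combination (h.1 + h.2)/2
          | linear_combination (-h.1 - h.2)/2
          | linear_combination (h.1 - h.2)*Complex.I/2 + z*Complex.I_sq
          | linear_combination (h.2 - h.1)*Complex.I/2 + z*Complex.I_sq
          | linear_combination (h.1 - h.2)*Complex.I/2 + z'*Complex.I_sq
          | linear_combination (h.2 - h.1)*Complex.I/2 + z'*Complex.I_sq)

lemma star_isq2 : star isq2 = isq2 := by simp [isq2, Complex.star_def]

set_option maxRecDepth 8000 in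
set_option maxHeartbeats 1000000 in
lemma amp_eq (ψ : Fin 2 × Fin 2 → ℂ) (a b : Fin 4) :
    bsmLocAmp ψ a b = wtab a b * (isq2 * isq2) * dot (bellP (bc a b)) ψ := by
  obtain rfl|rfl|rfl|rfl : a = 0 ∨ a = 1 ∨ a = 2 ∨ a = 3 := by omega
  all_goals obtain rfl|rfl|rfl|rfl : b = 0 ∨ b = 1 ∨ b = 2 ∨ b = 3 := by omega
  all_goals
    simp only [bsmLocAmp, dot, bellP, phiP, wtab, bc, pauli, Fin.sum_univ_two,
      Fintype.sum_prod_type, sx, sy, sz, Matrix.one_apply,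
      Matrix.cons_val', Matrix.cons_val, Matrix.cons_val_succ, Matrix.cons_val_zero, Matrix.cons_val_one, Matrix.head_cons,
      Matrix.cons_val_two, Matrix.cons_val_three, Matrix.vecHead, Matrix.vecTail,
      Matrix.empty_val', Matrix.cons_val_fin_one, Matrix.of_apply, Function.comp,
      star_mul', star_isq2, star_one, star_zero, star_neg, Complex.star_def, Complex.conj_I,
      _root_.map_one, _root_.map_zero, Fin.zero_eta, Fin.mk_one]
  all_goals norm_num [Complex.I_sq, Complex.I_mul_I, Matrix.vecHead, Matrix.vecTail]
  all_goals ring_nf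
  all_goals try simp only [Complex.I_sq]
  all_goals try ring

lemma wtab_norm (a b : Fin 4) : ‖wtab a b‖ = 1 := by
  fin_cases a <;> fin_cases b <;>
    simp [wtab, Matrix.vecHead, Matrix.vecTail, Complex.norm_I]

lemma wtab_ne_zero (a b : Fin 4) : wtab a b ≠ 0 := by
  intro h
  have := wtab_norm a b
  rw [h] at this
  simp at this

lemma isq2_mul : isq2 * isq2 = (1/2 : ℂ) := by
  have h : (Real.sqrt 2)⁻¹ * (Real.sqrt 2)⁻¹ = (1/2 : ℝ) := by
    rw [← mul_inv, Real.mul_self_sqrt (by norm_num)]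
    norm_num
  calc isq2 * isq2 = (((Real.sqrt 2)⁻¹ * (Real.sqrt 2)⁻¹ : ℝ) : ℂ) := by
        simp [isq2]
    _ = (1/2 : ℂ) := by rw [h]; norm_num

end Aux

/-- the joint outcome statistics of the BSM-localization protocol reproduce
the Born rule of the nonlocal Bell measurement: Prob(a,b) = (1/4)·|⟨B_c|ψ⟩|² where B_c
is the unique Bell state with σ_c ∝ σ_a σ_b. -/
theorem bsm_localization_born_rule (ψ : Fin 2 × Fin 2 → ℂ) (hψ : dot ψ ψ = 1)
    (a b c : Fin 4) (hc : ∃ z : ℂ, z ≠ 0 ∧ pauli a * pauli b = z • pauli c) :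
    ‖bsmLocAmp ψ a b‖ ^ 2 = (1 / 4) * ‖dot (bellP c) ψ‖ ^ 2 := by
  obtain ⟨z, hz, h⟩ := hc
  rw [pauli_mul] at h
  obtain ⟨hcc, -⟩ := pauli_indep (wtab_ne_zero a b) h
  rw [amp_eq ψ a b, hcc, isq2_mul, norm_mul, norm_mul, wtab_norm]
  have : ‖(1/2 : ℂ)‖ = 1/2 := by norm_num
  rw [this]
  ring
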